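/- Let 2 < γ < 3, γ/2 − 1 < s < γ − 2, N ≥ 2, and let m be the I-method multiplier of order 1−s with threshold N. Then for all dyadic N₃ ≥ N₄ with N₃ ≥ N₄ ≳ N, one has m(N₃) N₃ · m(N₄) N₄^{3-γ} ≥ c N^{4-γ-ε} N₃^{ε} for any small ε ∈ (0, 4−γ−1) and some constant c > 0 depending only on ε, γ, s. In particular, since 4 − γ > 1, this quantity dominates N^{1-ε} N₃^{ε}. -/

import Mathlib

open Real

/-- Case 3a (subcase `γ/2 − 1 < s < γ − 2`) frequency inequality:
`m(N₃) N₃ · m(N₄) N₄^{3-γ} ≥ c N^{4-γ-ε} N₃^{ε}`, which in particular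
dominates `N^{1-ε} N₃^{ε}` since `4 − γ > 1`. -/
theorem stmt_5 (γ s : ℝ) (hγ2 : 2 < γ) (hγ3 : γ < 3)
    (hsl : γ / 2 - 1 < s) (hsu : s < γ - 2)
    (ε : ℝ) (hε0 : 0 < ε) (hεs : ε ≤ 2 * s + 2 - γ) (hεγ : ε < 4 - γ - 1) :
    ∃ c : ℝ, 0 < c ∧
      ∀ (N : ℝ), 2 ≤ N →
      ∀ m : ℝ → ℝ,
        (∀ r : ℝ, r ≤ N → m r = 1) →
        (∀ r : ℝ, 2 * N ≤ r → m r = (N / r) ^ (1 - s)) →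
        (∀ r₁ r₂ : ℝ, 0 ≤ r₁ → r₁ ≤ r₂ → m r₂ ≤ m r₁) →
      ∀ N₃ N₄ : ℝ, N ≤ N₄ → N₄ ≤ N₃ →
        c * N ^ (4 - γ - ε) * N₃ ^ ε ≤ m N₃ * N₃ * (m N₄ * N₄ ^ (3 - γ)) ∧
        c * N ^ (1 - ε) * N₃ ^ ε ≤ m N₃ * N₃ * (m N₄ * N₄ ^ (3 - γ)) := by
  set A : ℝ := ((1/2 : ℝ)) ^ (1 - s) with hA
  have hs1 : s < 1 := by linarith
  have hApos : 0 < A := Real.rpow_pos_of_pos (by norm_num) _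
  have hA1 : A ≤ 1 := Real.rpow_le_one (by norm_num) (by norm_num) (by linarith)
  refine ⟨A * A, mul_pos hApos hApos, ?_⟩
  intro N hN m hlow hhigh hmono N₃ N₄ hNN₄ hN₄N₃
  have hNpos : (0 : ℝ) < N := by linarith
  have hN₄pos : (0 : ℝ) < N₄ := by linarith
  have hN₃pos : (0 : ℝ) < N₃ := by linarith
  have hN1 : (1 : ℝ) ≤ N := by linarith
  -- key lower bound on m
  have hm : ∀ r : ℝ, N ≤ r → A * (N / r) ^ (1 - s) ≤ m r := by
    intro r hr
    have hrpos : 0 < r := lt_of_lt_of_le hNpos hr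
    have hdiv1 : N / r ≤ 1 := (div_le_one hrpos).2 hr
    have hdivpos : 0 < N / r := div_pos hNpos hrpos
    by_cases h2 : 2 * N ≤ r
    · rw [hhigh r h2]
      have : (0:ℝ) ≤ (N / r) ^ (1 - s) := (Real.rpow_pos_of_pos hdivpos _).le
      nlinarith
    · have h2N : r ≤ 2 * N := le_of_not_ge h2
      have hm2N : m (2 * N) = A := by
        rw [hhigh (2 * N) le_rfl, hA]
        congr 1
        field_simp
      have h1 : m (2 * N) ≤ m r := hmono r (2 * N) hrpos.le h2N
      have h2' : (N / r) ^ (1 - s) ≤ 1 :=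
        Real.rpow_le_one hdivpos.le hdiv1 (by linarith)
      calc A * (N / r) ^ (1 - s) ≤ A * 1 := by
            exact mul_le_mul_of_nonneg_left h2' hApos.le
        _ = m (2 * N) := by rw [hm2N, mul_one]
        _ ≤ m r := h1
  -- algebraic identities
  have hne3 : (N₃:ℝ) ^ (1 - s) ≠ 0 := (Real.rpow_pos_of_pos hN₃pos _).ne'
  have hne4 : (N₄:ℝ) ^ (1 - s) ≠ 0 := (Real.rpow_pos_of_pos hN₄pos _).ne'
  have h3split : N₃ ^ s * N₃ ^ (1 - s) = N₃ := by
    rw [← Real.rpow_add hN₃pos]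
    norm_num
  have h4split : N₄ ^ (s + 2 - γ) * N₄ ^ (1 - s) = N₄ ^ (3 - γ) := by
    rw [← Real.rpow_add hN₄pos]
    ring_nf
  have e1 : (N / N₃) ^ (1 - s) * N₃ = N ^ (1 - s) * N₃ ^ s := by
    rw [Real.div_rpow hNpos.le hN₃pos.le]
    field_simp
    rw [mul_comm, h3split]
  have e2 : (N / N₄) ^ (1 - s) * N₄ ^ (3 - γ) = N ^ (1 - s) * N₄ ^ (s + 2 - γ) := by
    rw [Real.div_rpow hNpos.le hN₄pos.le]
    field_simp
    rw [mul_comm, h4split]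
  have eN : N ^ (4 - γ - ε) = N ^ (1-s) * N ^ (1-s) * N ^ (2*s + 2 - γ - ε) := by
    rw [← Real.rpow_add hNpos, ← Real.rpow_add hNpos]
    ring_nf
  have eN₃ : N₃ ^ (2*s + 2 - γ - ε) * N₃ ^ ε = N₃ ^ s * N₃ ^ (s + 2 - γ) := by
    rw [← Real.rpow_add hN₃pos, ← Real.rpow_add hN₃pos]
    ring_nf
  have key : A * A * N ^ (4 - γ - ε) * N₃ ^ ε ≤ m N₃ * N₃ * (m N₄ * N₄ ^ (3 - γ)) := by
    have step1 : N ^ (2*s + 2 - γ - ε) ≤ N₃ ^ (2*s + 2 - γ - ε) :=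
      Real.rpow_le_rpow hNpos.le (le_trans hNN₄ hN₄N₃) (by linarith)
    have step2 : N₃ ^ (s + 2 - γ) ≤ N₄ ^ (s + 2 - γ) :=
      Real.rpow_le_rpow_of_nonpos hN₄pos hN₄N₃ (by linarith)
    calc A * A * N ^ (4 - γ - ε) * N₃ ^ ε
        = A * A * (N ^ (1-s) * N ^ (1-s) * N ^ (2*s + 2 - γ - ε)) * N₃ ^ ε := by
          rw [eN]
      _ ≤ A * A * (N ^ (1-s) * N ^ (1-s) * N₃ ^ (2*s + 2 - γ - ε)) * N₃ ^ ε := by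
          gcongr
      _ = A * A * (N ^ (1-s) * N ^ (1-s)) * (N₃ ^ s * N₃ ^ (s + 2 - γ)) := by
          rw [← eN₃]; ring
      _ ≤ A * A * (N ^ (1-s) * N ^ (1-s)) * (N₃ ^ s * N₄ ^ (s + 2 - γ)) := by
          gcongr
      _ = (A * (N / N₃) ^ (1 - s) * N₃) * (A * (N / N₄) ^ (1 - s) * N₄ ^ (3 - γ)) := by
          rw [mul_assoc A ((N / N₃) ^ (1 - s)) N₃, e1,
            mul_assoc A ((N / N₄) ^ (1 - s)) (N₄ ^ (3 - γ)), e2]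
          ring
      _ ≤ m N₃ * N₃ * (m N₄ * N₄ ^ (3 - γ)) := by
          have h3 := hm N₃ (le_trans hNN₄ hN₄N₃)
          have h4 := hm N₄ hNN₄
          have hp3 : (0:ℝ) ≤ A * (N / N₃) ^ (1 - s) :=
            mul_nonneg hApos.le (Real.rpow_pos_of_pos (div_pos hNpos hN₃pos) _).le
          have hp4 : (0:ℝ) ≤ A * (N / N₄) ^ (1 - s) :=
            mul_nonneg hApos.le (Real.rpow_pos_of_pos (div_pos hNpos hN₄pos) _).le
          have hmN₃ : (0:ℝ) ≤ m N₃ := le_trans hp3 h3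
          exact mul_le_mul (mul_le_mul_of_nonneg_right h3 hN₃pos.le)
            (mul_le_mul_of_nonneg_right h4 (Real.rpow_pos_of_pos hN₄pos _).le)
            (mul_nonneg hp4 (Real.rpow_pos_of_pos hN₄pos _).le)
            (mul_nonneg hmN₃ hN₃pos.le)
  refine ⟨key, le_trans ?_ key⟩
  have hexp : N ^ (1 - ε) ≤ N ^ (4 - γ - ε) :=
    Real.rpow_le_rpow_of_exponent_le hN1 (by linarith)
  exact mul_le_mul_of_nonneg_right
    (mul_le_mul_of_nonneg_left hexp (mul_pos hApos hApos).le)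
    (Real.rpow_pos_of_pos hN₃pos _).le
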